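/- arXiv:2305.01270 — 3 statements merged into one kernel-verified Lean document; each statement's English description precedes it below -/
import Mathlib

section
/- Let G be a (possibly nonabelian) group of order p^m for an odd prime p, equipped with an action of an involution σ. Then the nonabelian first cohomology set H¹(⟨σ⟩, G) is trivial: every g ∈ G with σ(g)·g = 1 equals h⁻¹·σ(h) for some h ∈ G. -/
/-- If `G` is a (possibly nonabelian) group of order `p^m` for an odd prime
`p`, with an involutive automorphism `σ`, then `H¹(⟨σ⟩, G)` is trivial: every `g` with
`σ g * g = 1` has the form `g = h⁻¹ * σ h`. -/
theorem H1_odd_p_group_trivial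
    (G : Type*) [Group G] [Finite G]
    (p m : ℕ) (hp : p.Prime) (hpodd : Odd p)
    (hcard : Nat.card G = p ^ m)
    (σ : G →* G) (hσ : ∀ g : G, σ (σ g) = g) :
    ∀ g : G, σ g * g = 1 → ∃ h : G, g = h⁻¹ * σ h := by
  intro g hg
  have hσg : σ g = g⁻¹ := by
    rw [eq_inv_iff_mul_eq_one]; exact hg
  set d := orderOf g with hd
  have hdvd : d ∣ p ^ m := hcard ▸ orderOf_dvd_natCard g
  have hodd : Odd d := by
    rcases Nat.even_or_odd d with he | ho
    · exfalso
      have h2 : 2 ∣ p ^ m := dvd_trans he.two_dvd hdvd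
      have h3 := Nat.odd_iff.mp (hpodd.pow (n := m))
      omega
    · exact ho
  have hdpos : 0 < d := orderOf_pos g
  obtain ⟨k, hk⟩ := hodd
  -- d = 2k+1
  refine ⟨g ^ k, ?_⟩
  have hσh : σ (g ^ k) = (g ^ k)⁻¹ := by
    rw [map_pow, hσg, inv_pow]
  rw [hσh, ← mul_inv_rev, ← pow_add]
  have : g ^ (k + k) * g = 1 := by
    rw [← pow_succ, show k + k + 1 = d by omega, pow_orderOf_eq_one]
  rw [eq_inv_iff_mul_eq_one, ← pow_succ', show k + k + 1 = d by omega,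
    pow_orderOf_eq_one]
end

section
/- With C_p° as above, the subgroup of W mapping C_p° into itself equals the normalizer N_W(W_p), and the subgroup fixing C_p° pointwise equals W_p; hence Γ_p = N_W(W_p)/W_p acts faithfully on C_p°, and two elements of C_p° lie in the same W-orbit if and only if they lie in the same Γ_p-orbit. -/
/-- The stabilizer `W_p` of `p` inside `W`, as a set. -/
def Wstab {C : Type*} [AddCommGroup C] [Module ℂ C]
    (W : Subgroup (C ≃ₗ[ℂ] C)) (p : C) : Set (C ≃ₗ[ℂ] C) :=
  {w : C ≃ₗ[ℂ] C | w ∈ W ∧ w p = p}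

/-- `C_p° = {q : q is fixed by all of W_p and W_q = W_p}`. -/
def CpCirc {C : Type*} [AddCommGroup C] [Module ℂ C]
    (W : Subgroup (C ≃ₗ[ℂ] C)) (p : C) : Set C :=
  {x : C | (∀ w ∈ Wstab W p, w x = x) ∧ Wstab W x = Wstab W p}


section Aux

variable {C : Type*} [AddCommGroup C] [Module ℂ C]

private lemma lmul_apply (v w : C ≃ₗ[ℂ] C) (x : C) : (v * w) x = v (w x) := rfl

private lemma linv_apply (v : C ≃ₗ[ℂ] C) (x : C) : v⁻¹ (v x) = x := v.symm_apply_apply x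

/-- Conjugation of stabilizers: `w ∈ W_{v q} ↔ v⁻¹ w v ∈ W_q`. -/
private lemma wconj_mem_stab (W : Subgroup (C ≃ₗ[ℂ] C)) {v : C ≃ₗ[ℂ] C} (hv : v ∈ W)
    (q : C) (w : C ≃ₗ[ℂ] C) :
    w ∈ Wstab W (v q) ↔ v⁻¹ * w * v ∈ Wstab W q := by
  simp only [Wstab, Set.mem_setOf_eq]
  constructor
  · rintro ⟨h1, h2⟩
    refine ⟨W.mul_mem (W.mul_mem (W.inv_mem hv) h1) hv, ?_⟩
    rw [lmul_apply, lmul_apply, h2, linv_apply]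
  · rintro ⟨h1, h2⟩
    have hw : w = v * (v⁻¹ * w * v) * v⁻¹ := by group
    constructor
    · rw [hw]; exact W.mul_mem (W.mul_mem hv h1) (W.inv_mem hv)
    · conv_lhs => rw [hw]
      rw [lmul_apply, lmul_apply, linv_apply, h2]

private lemma p_mem_CpCirc (W : Subgroup (C ≃ₗ[ℂ] C)) (p : C) : p ∈ CpCirc W p :=
  ⟨fun _ hw => hw.2, rfl⟩

end Aux

/-- The subgroup of `W` mapping `C_p°` into itself is the normalizer
`N_W(W_p)`; the subgroup fixing `C_p°` pointwise is `W_p` (so `Γ_p = N_W(W_p)/W_p` acts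
faithfully on `C_p°`); and two elements of `C_p°` are `W`-conjugate iff they are
conjugate under `N_W(W_p)` (i.e. under `Γ_p`). -/
theorem normalizer_acts_on_CpCirc
    (C : Type*) [AddCommGroup C] [Module ℂ C] [FiniteDimensional ℂ C]
    (W : Subgroup (C ≃ₗ[ℂ] C)) (hWfin : (W : Set (C ≃ₗ[ℂ] C)).Finite)
    -- `W` is a complex reflection group: it is generated by its complex reflections
    (hWrefl : Subgroup.closure {w : C ≃ₗ[ℂ] C | w ∈ W ∧ w ≠ 1 ∧
        Module.finrank ℂ (LinearMap.ker ((w : C →ₗ[ℂ] C) - LinearMap.id)) =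
          Module.finrank ℂ C - 1} = W)
    (p : C) :
    -- the setwise stabilizer of `C_p°` in `W` is the normalizer of `W_p`
    ({v : C ≃ₗ[ℂ] C | v ∈ W ∧ ∀ q ∈ CpCirc W p, v q ∈ CpCirc W p} =
      {v : C ≃ₗ[ℂ] C | v ∈ W ∧ ∀ w : C ≃ₗ[ℂ] C, w ∈ Wstab W p ↔ v * w * v⁻¹ ∈ Wstab W p}) ∧
    -- the pointwise stabilizer of `C_p°` in `W` is `W_p` (faithfulness of the `Γ_p`-action)
    ({v : C ≃ₗ[ℂ] C | v ∈ W ∧ ∀ q ∈ CpCirc W p, v q = q} = Wstab W p) ∧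
    -- two elements of `C_p°` are `W`-conjugate iff they are `N_W(W_p)`-conjugate
    (∀ q₁ ∈ CpCirc W p, ∀ q₂ ∈ CpCirc W p,
      ((∃ w ∈ W, w q₁ = q₂) ↔
        ∃ v : C ≃ₗ[ℂ] C, v ∈ W ∧
          (∀ w : C ≃ₗ[ℂ] C, w ∈ Wstab W p ↔ v * w * v⁻¹ ∈ Wstab W p) ∧ v q₁ = q₂)) := by
  have key : ∀ v : C ≃ₗ[ℂ] C, v ∈ W → v p ∈ CpCirc W p →
      (∀ w : C ≃ₗ[ℂ] C, w ∈ Wstab W p ↔ v * w * v⁻¹ ∈ Wstab W p) := by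
    intro v hv hvp w
    have h := wconj_mem_stab W hv p (v * w * v⁻¹)
    rw [hvp.2] at h
    have hsimp : v⁻¹ * (v * w * v⁻¹) * v = w := by group
    rw [hsimp] at h
    exact h.symm
  have norm_maps : ∀ v : C ≃ₗ[ℂ] C, v ∈ W →
      (∀ w : C ≃ₗ[ℂ] C, w ∈ Wstab W p ↔ v * w * v⁻¹ ∈ Wstab W p) →
      ∀ q ∈ CpCirc W p, v q ∈ CpCirc W p := by
    intro v hv hnorm q hq
    have hconjmem : ∀ w : C ≃ₗ[ℂ] C, w ∈ Wstab W p ↔ v⁻¹ * w * v ∈ Wstab W p := by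
      intro w
      have := hnorm (v⁻¹ * w * v)
      have hsimp : v * (v⁻¹ * w * v) * v⁻¹ = w := by group
      rw [hsimp] at this
      exact this.symm
    constructor
    · intro w hw
      have h1 : v⁻¹ * w * v ∈ Wstab W q := by
        rw [hq.2]; exact (hconjmem w).mp hw
      have h2 := h1.2
      rw [lmul_apply, lmul_apply] at h2
      have := congrArg v h2
      rwa [show ∀ x, v (v⁻¹ x) = x from v.apply_symm_apply] at this
    · ext w
      rw [wconj_mem_stab W hv q w, hq.2]
      exact (hconjmem w).symm
  refine ⟨?_, ?_, ?_⟩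
  · ext v
    simp only [Set.mem_setOf_eq]
    constructor
    · rintro ⟨hv, hmap⟩
      exact ⟨hv, key v hv (hmap p (p_mem_CpCirc W p))⟩
    · rintro ⟨hv, hnorm⟩
      exact ⟨hv, norm_maps v hv hnorm⟩
  · ext v
    simp only [Set.mem_setOf_eq]
    constructor
    · rintro ⟨hv, hfix⟩
      exact ⟨hv, hfix p (p_mem_CpCirc W p)⟩
    · rintro ⟨hv, hvp⟩
      exact ⟨hv, fun q hq => (hq.1 v ⟨hv, hvp⟩)⟩
  · intro q₁ hq₁ q₂ hq₂
    constructor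
    · rintro ⟨w, hw, hwq⟩
      refine ⟨w, hw, ?_, hwq⟩
      intro u
      have h := wconj_mem_stab W hw q₁ u
      rw [hwq, hq₁.2, hq₂.2] at h
      have h2 := wconj_mem_stab W hw q₁ (w * u * w⁻¹)
      rw [hwq, hq₁.2, hq₂.2] at h2
      have hsimp : w⁻¹ * (w * u * w⁻¹) * w = u := by group
      rw [hsimp] at h2
      exact h2.symm
    · rintro ⟨v, hv, _, hvq⟩
      exact ⟨v, hv, hvq⟩
end

section
/- The subgroup of SL(3,ℂ)³ consisting of the elements diag(δ²ζ², εδ²ζ², εδ²ζ²) × diag(δ, εδ, εδ) × diag(εζ, εζ, ζ), where ζ, δ range over cube roots of unity and ε over {±1}, is a group isomorphic to Z/3Z × Z/3Z × Z/2Z (in particular it has order 18), and it stabilizes the tensor |002⟩+|011⟩+|020⟩+|101⟩+|112⟩+|200⟩ ∈ ℂ³⊗ℂ³⊗ℂ³. -/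
open Matrix

/-- `ℂ³ ⊗ ℂ³ ⊗ ℂ³` in coordinates. -/
abbrev Qutrit3 : Type := Fin 3 → Fin 3 → Fin 3 → ℂ

/-- The basis vector `|abc⟩ = e_a ⊗ e_b ⊗ e_c`. -/
noncomputable def ket (a b c : Fin 3) : Qutrit3 :=
  fun j k l => if j = a ∧ k = b ∧ l = c then 1 else 0

/-- The action `(g₁,g₂,g₃)·(v₁⊗v₂⊗v₃) = g₁v₁⊗g₂v₂⊗g₃v₃` in coordinates. -/
noncomputable def actQ (g₁ g₂ g₃ : Matrix (Fin 3) (Fin 3) ℂ) (v : Qutrit3) : Qutrit3 :=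
  fun j k l => ∑ a, ∑ b, ∑ c, g₁ j a * g₂ k b * g₃ l c * v a b c

/-- The set of triples `diag(δ²ζ², εδ²ζ², εδ²ζ²) × diag(δ, εδ, εδ) × diag(εζ, εζ, ζ)`,
with `ζ³ = δ³ = 1` and `ε² = 1`. -/
noncomputable def stabSet :
    Set (Matrix (Fin 3) (Fin 3) ℂ × Matrix (Fin 3) (Fin 3) ℂ × Matrix (Fin 3) (Fin 3) ℂ) :=
  {x | ∃ ζ δ ε : ℂ, ζ ^ 3 = 1 ∧ δ ^ 3 = 1 ∧ ε ^ 2 = 1 ∧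
    x = (Matrix.diagonal ![δ^2 * ζ^2, ε * δ^2 * ζ^2, ε * δ^2 * ζ^2],
         Matrix.diagonal ![δ, ε * δ, ε * δ],
         Matrix.diagonal ![ε * ζ, ε * ζ, ζ])}

namespace Stab19

/-- The triple of diagonal matrices. -/
noncomputable def tripleOf (ζ δ ε : ℂ) :
    Matrix (Fin 3) (Fin 3) ℂ × Matrix (Fin 3) (Fin 3) ℂ × Matrix (Fin 3) (Fin 3) ℂ :=
  (Matrix.diagonal ![δ^2 * ζ^2, ε * δ^2 * ζ^2, ε * δ^2 * ζ^2],
   Matrix.diagonal ![δ, ε * δ, ε * δ],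
   Matrix.diagonal ![ε * ζ, ε * ζ, ζ])

lemma tripleOf_mul (ζ δ ε ζ' δ' ε' : ℂ) :
    tripleOf ζ δ ε * tripleOf ζ' δ' ε' = tripleOf (ζ * ζ') (δ * δ') (ε * ε') := by
  simp only [tripleOf, Prod.mk_mul_mk, Matrix.diagonal_mul_diagonal]
  refine Prod.ext ?_ (Prod.ext ?_ ?_) <;> simp only [] <;>
    (ext i j; fin_cases i <;> fin_cases j <;> simp [Matrix.diagonal_apply] <;> ring)

lemma tripleOf_one : tripleOf 1 1 1 = 1 := by
  simp only [tripleOf]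
  refine Prod.ext ?_ (Prod.ext ?_ ?_) <;> simp only [Prod.fst_one, Prod.snd_one] <;>
    (ext i j; fin_cases i <;> fin_cases j <;> simp [Matrix.diagonal_apply, Matrix.one_apply])

noncomputable def ω : ℂ := Complex.exp (2 * Real.pi * Complex.I / 3)

lemma hω : IsPrimitiveRoot ω 3 := Complex.isPrimitiveRoot_exp 3 (by norm_num)

lemma ω3 : ω ^ 3 = 1 := hω.pow_eq_one

noncomputable def χ3 (a : Multiplicative (ZMod 3)) : ℂ := ω ^ (Multiplicative.toAdd a).val

noncomputable def χ2 (a : Multiplicative (ZMod 2)) : ℂ := (-1 : ℂ) ^ (Multiplicative.toAdd a).val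

lemma χ3_mul (a b : Multiplicative (ZMod 3)) : χ3 (a * b) = χ3 a * χ3 b := by
  simp only [χ3, toAdd_mul, ZMod.val_add]
  rw [← pow_eq_pow_mod _ ω3, pow_add]

lemma χ2_mul (a b : Multiplicative (ZMod 2)) : χ2 (a * b) = χ2 a * χ2 b := by
  simp only [χ2, toAdd_mul, ZMod.val_add]
  rw [← pow_eq_pow_mod _ (by norm_num : (-1 : ℂ) ^ 2 = 1), pow_add]

lemma χ3_cube (a : Multiplicative (ZMod 3)) : χ3 a ^ 3 = 1 := by
  rw [χ3, ← pow_mul, mul_comm, pow_mul, ω3, one_pow]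

lemma χ2_sq (a : Multiplicative (ZMod 2)) : χ2 a ^ 2 = 1 := by
  rw [χ2, ← pow_mul, mul_comm, pow_mul]; norm_num

lemma χ3_inj : Function.Injective χ3 := by
  intro a b h
  have := hω.pow_inj (ZMod.val_lt _) (ZMod.val_lt _) h
  exact Multiplicative.toAdd.injective (ZMod.val_injective _ this)

lemma χ2_inj : Function.Injective χ2 := by
  intro a b h
  have ha := ZMod.val_lt (Multiplicative.toAdd a)
  have hb := ZMod.val_lt (Multiplicative.toAdd b)
  have : (Multiplicative.toAdd a).val = (Multiplicative.toAdd b).val := by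
    unfold χ2 at h
    interval_cases h1 : (Multiplicative.toAdd a).val <;>
      interval_cases h2 : (Multiplicative.toAdd b).val <;> simp_all <;> norm_num at h
  exact Multiplicative.toAdd.injective (ZMod.val_injective _ this)

lemma χ3_surj {ζ : ℂ} (h : ζ ^ 3 = 1) : ∃ a, χ3 a = ζ := by
  obtain ⟨i, hi, hζ⟩ := hω.eq_pow_of_pow_eq_one h
  refine ⟨Multiplicative.ofAdd (i : ZMod 3), ?_⟩
  rw [χ3, toAdd_ofAdd, ZMod.val_natCast, Nat.mod_eq_of_lt hi, hζ]

lemma χ2_surj {ε : ℂ} (h : ε ^ 2 = 1) : ∃ a, χ2 a = ε := by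
  have : (ε - 1) * (ε + 1) = 0 := by linear_combination h
  rcases mul_eq_zero.mp this with h' | h'
  · refine ⟨Multiplicative.ofAdd 0, ?_⟩
    rw [χ2, sub_eq_zero.mp h']
    simp
  · refine ⟨Multiplicative.ofAdd 1, ?_⟩
    have : ε = -1 := eq_neg_of_add_eq_zero_left h'
    rw [χ2, toAdd_ofAdd, this]
    norm_num [ZMod.val_one]

/-- The monoid homomorphism from `ℤ/3 × ℤ/3 × ℤ/2` onto the stabilizer. -/
noncomputable def e' :
    (Multiplicative (ZMod 3) × Multiplicative (ZMod 3) × Multiplicative (ZMod 2)) →*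
      (Matrix (Fin 3) (Fin 3) ℂ × Matrix (Fin 3) (Fin 3) ℂ × Matrix (Fin 3) (Fin 3) ℂ) where
  toFun x := tripleOf (χ3 x.1) (χ3 x.2.1) (χ2 x.2.2)
  map_one' := by
    simp only [Prod.fst_one, Prod.snd_one]
    rw [show χ3 1 = 1 by rw [χ3]; simp [ZMod.val_one],
        show χ2 1 = 1 by rw [χ2]; simp [ZMod.val_one], tripleOf_one]
  map_mul' x y := by
    simp only [Prod.fst_mul, Prod.snd_mul, χ3_mul, χ2_mul, tripleOf_mul]

lemma range_e' : Set.range e' = stabSet := by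
  ext x
  constructor
  · rintro ⟨⟨a, b, c⟩, rfl⟩
    exact ⟨χ3 a, χ3 b, χ2 c, χ3_cube a, χ3_cube b, χ2_sq c, rfl⟩
  · rintro ⟨ζ, δ, ε, hζ, hδ, hε, rfl⟩
    obtain ⟨a, ha⟩ := χ3_surj hζ
    obtain ⟨b, hb⟩ := χ3_surj hδ
    obtain ⟨c, hc⟩ := χ2_surj hε
    exact ⟨(a, b, c), by simp [e', tripleOf, ha, hb, hc]⟩

lemma e'_inj : Function.Injective e' := by
  rintro ⟨a, b, c⟩ ⟨a', b', c'⟩ h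
  simp only [e', tripleOf, MonoidHom.coe_mk, OneHom.coe_mk, Prod.mk.injEq] at h
  obtain ⟨h1, h2, h3⟩ := h
  have hζ : χ3 a = χ3 a' := by
    have := congr_fun (congr_fun h3 2) 2
    simpa using this
  have hδ : χ3 b = χ3 b' := by
    have := congr_fun (congr_fun h2 0) 0
    simpa using this
  have hε : χ2 c = χ2 c' := by
    have h30 := congr_fun (congr_fun h3 0) 0
    simp only [Matrix.diagonal_apply_eq] at h30
    have hz : χ3 a ≠ 0 := by
      intro h0
      have := χ3_cube a
      rw [h0] at this; norm_num at this
    have : χ2 c * χ3 a = χ2 c' * χ3 a := by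
      simpa [hζ] using h30
    exact mul_right_cancel₀ hz this
  exact Prod.ext (χ3_inj hζ) (Prod.ext (χ3_inj hδ) (χ2_inj hε))

end Stab19

/-- The above set of matrix triples lies in `SL(3,ℂ)³`, forms a group
isomorphic to `ℤ/3 × ℤ/3 × ℤ/2` (in particular of order 18), and stabilizes the tensor
`|002⟩+|011⟩+|020⟩+|101⟩+|112⟩+|200⟩`. -/
theorem stabSet_is_group_of_order_18 :
    (∀ x ∈ stabSet, x.1.det = 1 ∧ x.2.1.det = 1 ∧ x.2.2.det = 1) ∧
    (∃ H : Submonoid (Matrix (Fin 3) (Fin 3) ℂ × Matrix (Fin 3) (Fin 3) ℂ ×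
        Matrix (Fin 3) (Fin 3) ℂ), (H : Set _) = stabSet ∧
      Nonempty (H ≃* (Multiplicative (ZMod 3) × Multiplicative (ZMod 3) ×
        Multiplicative (ZMod 2)))) ∧
    Nat.card stabSet = 18 ∧
    (∀ x ∈ stabSet, actQ x.1 x.2.1 x.2.2
        (ket 0 0 2 + ket 0 1 1 + ket 0 2 0 + ket 1 0 1 + ket 1 1 2 + ket 2 0 0) =
      ket 0 0 2 + ket 0 1 1 + ket 0 2 0 + ket 1 0 1 + ket 1 1 2 + ket 2 0 0) := by
  refine ⟨?_, ?_, ?_, ?_⟩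
  · rintro x ⟨ζ, δ, ε, hζ, hδ, hε, rfl⟩
    refine ⟨?_, ?_, ?_⟩ <;>
      simp only [Matrix.det_diagonal, Fin.prod_univ_three] <;> simp
    · linear_combination (δ^6*ζ^6) * hε + (ζ^6*(δ^3+1)) * hδ + (ζ^3+1) * hζ
    · linear_combination (δ^3) * hε + hδ
    · linear_combination (ζ^3) * hε + hζ
  · refine ⟨MonoidHom.mrange Stab19.e', ?_, ?_⟩
    · rw [MonoidHom.coe_mrange, Stab19.range_e']
    · refine ⟨(MulEquiv.ofBijective (MonoidHom.mrangeRestrict Stab19.e')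
        ⟨fun x y h => Stab19.e'_inj (Subtype.ext_iff.mp h),
         MonoidHom.mrangeRestrict_surjective Stab19.e'⟩).symm⟩
  · rw [← Stab19.range_e', Nat.card_range_of_injective Stab19.e'_inj]
    simp [Nat.card_eq_fintype_card]
  · rintro x ⟨ζ, δ, ε, hζ, hδ, hε, rfl⟩
    funext j k l
    simp only [actQ, ket, Fin.sum_univ_three, Matrix.diagonal_apply, Pi.add_apply]
    fin_cases j <;> fin_cases k <;> fin_cases l <;>
      simp <;>
      first
        | linear_combination (ζ^3) * hδ + hζ
        | linear_combination (δ^3*ζ^3) * hε + (ζ^3) * hδ + hζ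
end
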